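/- Let G be a polynomial with real coefficients having only real zeros, and let c, d be real numbers with |c| < |d|. If G has at least one root (deg G ≥ 1), then |G(ic)| < |G(id)|. -/

import Mathlib

open Complex Polynomial

lemma multiset_prod_lt_prod {ι : Type*} (s : Multiset ι) (hs : s ≠ 0) (f g : ι → ℝ)
    (hf : ∀ i ∈ s, 0 ≤ f i) (hfg : ∀ i ∈ s, f i < g i) :
    (s.map f).prod < (s.map g).prod := by
  induction s using Multiset.induction with
  | empty => exact absurd rfl hs
  | cons a t ih =>
    simp only [Multiset.map_cons, Multiset.prod_cons]
    rcases eq_or_ne t 0 with rfl | ht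
    · simpa using hfg a (Multiset.mem_cons_self a 0)
    · exact mul_lt_mul'' (hfg a (Multiset.mem_cons_self a t))
        (ih ht (fun i hi => hf i (Multiset.mem_cons_of_mem hi))
          (fun i hi => hfg i (Multiset.mem_cons_of_mem hi)))
        (hf a (Multiset.mem_cons_self a t))
        (Multiset.prod_nonneg (fun x hx => by
          obtain ⟨i, hi, rfl⟩ := Multiset.mem_map.mp hx
          exact hf i (Multiset.mem_cons_of_mem hi)))

theorem abs_eval_imaginary_strictMono (G : Polynomial ℝ)
    (hroots : ∀ z : ℂ, (G.map (algebraMap ℝ ℂ)).eval z = 0 → z.im = 0)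
    (hdeg : 1 ≤ G.natDegree)
    (c d : ℝ) (hcd : |c| < |d|) :
    ‖(G.map (algebraMap ℝ ℂ)).eval (I * c)‖
      < ‖(G.map (algebraMap ℝ ℂ)).eval (I * d)‖ := by
  set Q : Polynomial ℂ := G.map (algebraMap ℝ ℂ) with hQ
  have hG0 : G ≠ 0 := fun h => by simp [h] at hdeg
  have hQ0 : Q ≠ 0 := by
    simpa [hQ] using (Polynomial.map_ne_zero_iff (algebraMap ℝ ℂ).injective).mpr hG0
  have hsplit : Q.Splits := IsAlgClosed.splits Q
  have heval : ∀ v : ℂ, Q.eval v = Q.leadingCoeff * (Q.roots.map fun a => v - a).prod :=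
    fun v => hsplit.eval_eq_prod_roots v
  have habs : ∀ v : ℂ, ‖Q.eval v‖
      = ‖Q.leadingCoeff‖ * (Q.roots.map fun a => ‖v - a‖).prod := by
    intro v
    rw [heval v, norm_mul, (show ‖(Q.roots.map fun a => v - a).prod‖ = ((Q.roots.map fun a => v - a).map fun x => ‖x‖).prod
      from map_multiset_prod (normHom : ℂ →*₀ ℝ) (Q.roots.map fun a => v - a)), Multiset.map_map]
    rfl
  have hcard : Q.roots ≠ 0 := by
    have : Q.roots.card = Q.natDegree := (Polynomial.splits_iff_card_roots.mp hsplit)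
    intro h
    rw [h] at this
    have : Q.natDegree = 0 := this.symm
    rw [hQ, Polynomial.natDegree_map_eq_of_injective (algebraMap ℝ ℂ).injective] at this
    omega
  have hlc : 0 < ‖Q.leadingCoeff‖ :=
    norm_pos_iff.mpr (Polynomial.leadingCoeff_ne_zero.mpr hQ0)
  rw [habs, habs]
  refine mul_lt_mul_of_pos_left ?_ hlc
  refine multiset_prod_lt_prod _ hcard _ _ (fun i _ => norm_nonneg _) ?_
  intro a ha
  have him : a.im = 0 := hroots a ((Polynomial.mem_roots hQ0).mp ha)
  have hsq : ∀ e : ℝ, ‖I * e - a‖^2 = e^2 + a.re^2 := by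
    intro e
    rw [Complex.sq_norm, Complex.normSq_apply]
    simp [him]
    ring
  have h2 : ‖I * c - a‖^2 < ‖I * d - a‖^2 := by
    rw [hsq, hsq]
    have : c^2 < d^2 := by
      have := mul_self_lt_mul_self (abs_nonneg c) hcd
      simpa [← abs_mul_self c, ← abs_mul_self d, ← sq] using this
    linarith
  exact lt_of_pow_lt_pow_left₀ 2 (norm_nonneg _) h2
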